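/- Kullback–Leibler bound for the uniform restriction to an ℓ1-ball on a simplex face. Fix I ⊆ {1,…,p}, an integer 1 ≤ M ≤ n, and η ∈ (0, 1/n]. Let ρ¹_{I,M,η} be the probability measure on S^p_{1,+}(I) with density with respect to μ_I proportional to the indicator 1[‖θ − θ*_{I,M}‖₁ ≤ η]. Then K(ρ¹_{I,M,η}, μ_I) ≤ (|I| − 1) · log( max(|I|, 4/η) ). -/

import Mathlib

open MeasureTheory Finset Set
open scoped ENNReal NNReal

/-- `S^p_{1,+}`: vectors `θ ∈ ℝ^p` with `‖θ‖₁ = 1` whose first nonzero coordinate is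
positive. -/
def Sp1plus (p : ℕ) : Set (Fin p → ℝ) :=
  {θ | (∑ j, |θ j| = 1) ∧ ∃ j, 0 < θ j ∧ ∀ i, i < j → θ i = 0}

/-- The face `S^p_{1,+}(I)` of `S^p_{1,+}` whose active coordinates are exactly `I`. -/
def SfaceI (p : ℕ) (I : Finset (Fin p)) : Set (Fin p → ℝ) :=
  {θ ∈ Sp1plus p | ∀ j, θ j ≠ 0 ↔ j ∈ I}

/-- The uniform probability measure `μ_I` on `S^p_{1,+}(I)`: normalized
`(|I|−1)`-dimensional Hausdorff measure restricted to the face. -/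
noncomputable def muFace (p : ℕ) (I : Finset (Fin p)) : Measure (Fin p → ℝ) :=
  ((μH[(I.card : ℝ) - 1]) (SfaceI p I))⁻¹ • (μH[(I.card : ℝ) - 1]).restrict (SfaceI p I)

/-- The Kullback–Leibler divergence, as an extended real: `∫ log (dm/dμ) dm` if `m ≪ μ`
(with value `+∞` if the integral diverges), and `+∞` otherwise. -/
noncomputable def klDivE {E : Type*} [MeasurableSpace E] (m μ : Measure E) : EReal :=
  open Classical in
  if m ≪ μ ∧ Integrable (llr m μ) m then ((∫ x, llr m μ x ∂m : ℝ) : EReal) else ⊤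

/-! ### Auxiliary lemmas -/

private def flipT {p : ℕ} (T : Finset (Fin p)) (θ : Fin p → ℝ) : Fin p → ℝ :=
  fun j => if j ∈ T then -θ j else θ j

private lemma flipT_flipT {p : ℕ} (T : Finset (Fin p)) (θ : Fin p → ℝ) :
    flipT T (flipT T θ) = θ := by
  funext j; unfold flipT; by_cases h : j ∈ T <;> simp [h]

private lemma flipT_isometry {p : ℕ} (T : Finset (Fin p)) : Isometry (flipT T) := by
  apply Isometry.of_dist_eq
  intro x y
  rw [dist_pi_def, dist_pi_def]
  congr 1
  apply Finset.sup_congr rfl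
  intro j _
  unfold flipT
  by_cases h : j ∈ T <;> simp [h, nndist_neg_neg]

private lemma flipT_abs {p : ℕ} (T : Finset (Fin p)) (θ : Fin p → ℝ) (j : Fin p) :
    |flipT T θ j| = |θ j| := by
  unfold flipT; by_cases h : j ∈ T <;> simp [h]

private lemma zero_of_lt_min {p : ℕ} {I : Finset (Fin p)} (hI : I.Nonempty)
    {θ : Fin p → ℝ} (hθ : θ ∈ SfaceI p I) {i : Fin p} (hi : i < I.min' hI) : θ i = 0 := by
  by_contra h
  exact absurd (I.min'_le i (hθ.2 i |>.mp h)) (not_le.mpr hi)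

private lemma pos_at_min {p : ℕ} {I : Finset (Fin p)} (hI : I.Nonempty)
    {θ : Fin p → ℝ} (hθ : θ ∈ SfaceI p I) : 0 < θ (I.min' hI) := by
  obtain ⟨⟨hsum, j, hj, hlt⟩, hsupp⟩ := hθ
  have hjI : j ∈ I := (hsupp j).mp (ne_of_gt hj)
  have h1 : I.min' hI ≤ j := I.min'_le j hjI
  rcases eq_or_lt_of_le h1 with h | h
  · rwa [h]
  · exact absurd (hlt _ h) ((hsupp _).mpr (I.min'_mem hI))

private lemma face_cover {p : ℕ} {I : Finset (Fin p)} (hI : I.Nonempty)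
    {θs : Fin p → ℝ} (hθs : θs ∈ SfaceI p I) :
    SfaceI p I ⊆ ⋃ T ∈ (I.erase (I.min' hI)).powerset,
      flipT T '' {θ ∈ SfaceI p I | ∀ j, 0 ≤ θ j * θs j} := by
  intro θ hθ
  classical
  set j₀ := I.min' hI with hj₀
  set T : Finset (Fin p) := (I.erase j₀).filter (fun j => θ j * θs j < 0) with hT
  have hTsub : T ⊆ I.erase j₀ := Finset.filter_subset _ _
  have hj₀T : j₀ ∉ T := fun h => (Finset.mem_erase.mp (hTsub h)).1 rfl
  refine Set.mem_biUnion (Finset.mem_powerset.mpr hTsub) ⟨flipT T θ, ⟨?_, ?_⟩, flipT_flipT T θ⟩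
  · -- flipT T θ ∈ SfaceI p I
    refine ⟨⟨?_, j₀, ?_, ?_⟩, ?_⟩
    · rw [show (∑ j, |flipT T θ j|) = ∑ j, |θ j| from
        Finset.sum_congr rfl fun j _ => flipT_abs T θ j]
      exact hθ.1.1
    · have : flipT T θ j₀ = θ j₀ := by unfold flipT; simp [hj₀T]
      rw [this]; exact pos_at_min hI hθ
    · intro i hi
      have : θ i = 0 := zero_of_lt_min hI hθ hi
      unfold flipT; simp [this]
    · intro j
      have : flipT T θ j ≠ 0 ↔ θ j ≠ 0 := by
        unfold flipT; by_cases h : j ∈ T <;> simp [h]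
      rw [this]; exact hθ.2 j
  · -- sign condition
    intro j
    by_cases hjT : j ∈ T
    · have hneg : θ j * θs j < 0 := (Finset.mem_filter.mp hjT).2
      have : flipT T θ j = -θ j := by unfold flipT; simp [hjT]
      rw [this]; nlinarith
    · have heq : flipT T θ j = θ j := by unfold flipT; simp [hjT]
      rw [heq]
      by_cases hjI : j ∈ I
      · by_cases hjj : j = j₀
        · have h1 : 0 < θ j₀ := pos_at_min hI hθ
          have h2 : 0 < θs j₀ := pos_at_min hI hθs
          rw [hjj]
          exact le_of_lt (mul_pos h1 h2)
        · have : j ∈ I.erase j₀ := Finset.mem_erase.mpr ⟨hjj, hjI⟩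
          have : ¬ (θ j * θs j < 0) := fun hc => hjT (Finset.mem_filter.mpr ⟨this, hc⟩)
          linarith [not_lt.mp this]
      · have : θ j = 0 := by
          by_contra h; exact hjI ((hθ.2 j).mp h)
        simp [this]

private lemma abs_convex_combo {a b t : ℝ} (ht0 : 0 ≤ t) (ht1 : t ≤ 1) (hab : 0 ≤ a * b) :
    |(1 - t) * b + t * a| = (1 - t) * |b| + t * |a| := by
  rcases lt_trichotomy b 0 with hb | hb | hb
  · have ha : a ≤ 0 := by nlinarith
    rw [abs_of_nonpos (show (1 - t) * b + t * a ≤ 0 by nlinarith), abs_of_nonpos hb.le,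
      abs_of_nonpos ha]
    ring
  · rw [hb]
    simp [abs_mul, abs_of_nonneg ht0]
  · have ha : 0 ≤ a := by nlinarith
    rw [abs_of_nonneg (show 0 ≤ (1 - t) * b + t * a by nlinarith), abs_of_nonneg hb.le,
      abs_of_nonneg ha]

private lemma homothety_image_subset {p : ℕ} {I : Finset (Fin p)} (hI : I.Nonempty)
    {η : ℝ} (hη : 0 < η) (hη1 : η ≤ 1)
    {θs : Fin p → ℝ} (hθs : θs ∈ SfaceI p I) :
    AffineMap.homothety θs (η/2) '' {θ ∈ SfaceI p I | ∀ j, 0 ≤ θ j * θs j} ⊆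
      {θ : Fin p → ℝ | ∑ j, |θ j - θs j| ≤ η} ∩ SfaceI p I := by
  rintro y ⟨θ, ⟨hθ, hsign⟩, rfl⟩
  set t := η / 2 with htdef
  have ht0 : 0 ≤ t := by positivity
  have ht1 : t ≤ 1 := by simp only [htdef]; linarith
  have ht1' : t < 1 := by simp only [htdef]; linarith
  have hyj : ∀ j, AffineMap.homothety θs t θ j = (1 - t) * θs j + t * θ j := by
    intro j
    simp [AffineMap.homothety_apply, Pi.smul_apply, smul_eq_mul]
    ring
  have habs : ∀ j, |AffineMap.homothety θs t θ j| = (1 - t) * |θs j| + t * |θ j| := by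
    intro j; rw [hyj j]; exact abs_convex_combo ht0 ht1 (hsign j)
  constructor
  · -- in the ℓ1 ball
    show (∑ j, |AffineMap.homothety θs t θ j - θs j|) ≤ η
    have h1 : ∀ j, |AffineMap.homothety θs t θ j - θs j| = t * |θ j - θs j| := by
      intro j
      rw [hyj j, show (1 - t) * θs j + t * θ j - θs j = t * (θ j - θs j) by ring,
        abs_mul, abs_of_nonneg ht0]
    calc (∑ j, |AffineMap.homothety θs t θ j - θs j|) = t * ∑ j, |θ j - θs j| := by
          rw [Finset.mul_sum]; exact Finset.sum_congr rfl fun j _ => h1 j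
      _ ≤ t * ∑ j, (|θ j| + |θs j|) := by
          refine mul_le_mul_of_nonneg_left (Finset.sum_le_sum fun j _ => abs_sub _ _) ht0
      _ = t * 2 := by rw [Finset.sum_add_distrib, hθ.1.1, hθs.1.1]; norm_num
      _ = η := by rw [htdef]; ring
  · -- in the face
    refine ⟨⟨?_, I.min' hI, ?_, ?_⟩, ?_⟩
    · calc (∑ j, |AffineMap.homothety θs t θ j|)
          = ∑ j, ((1 - t) * |θs j| + t * |θ j|) := Finset.sum_congr rfl fun j _ => habs j
        _ = (1 - t) * ∑ j, |θs j| + t * ∑ j, |θ j| := by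
            rw [Finset.sum_add_distrib, Finset.mul_sum, Finset.mul_sum]
        _ = 1 := by rw [hθ.1.1, hθs.1.1]; ring
    · rw [hyj]
      have h1 := pos_at_min hI hθ
      have h2 := pos_at_min hI hθs
      nlinarith
    · intro i hi
      rw [hyj, zero_of_lt_min hI hθ hi, zero_of_lt_min hI hθs hi]
      ring
    · intro j
      constructor
      · intro hne
        by_contra hjI
        have h1 : θ j = 0 := by
          by_contra h; exact hjI ((hθ.2 j).mp h)
        have h2 : θs j = 0 := by
          by_contra h; exact hjI ((hθs.2 j).mp h)
        exact hne (by rw [hyj, h1, h2]; ring)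
      · intro hjI
        have h2 : θs j ≠ 0 := (hθs.2 j).mpr hjI
        have : 0 < |AffineMap.homothety θs t θ j| := by
          rw [habs j]
          have : 0 < (1 - t) * |θs j| := by
            have := abs_pos.mpr h2
            nlinarith
          nlinarith [abs_nonneg (θ j), mul_nonneg ht0 (abs_nonneg (θ j))]
        exact abs_pos.mp this

theorem kl_uniform_restriction_simplex_face
    (p n : ℕ) (hn : 1 ≤ n) (I : Finset (Fin p))
    (M : ℕ) (hM1 : 1 ≤ M) (hMn : M ≤ n)
    (η : ℝ) (hη : 0 < η) (hη' : η ≤ 1 / n)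
    (θstarIM : Fin p → ℝ) (hθstar : θstarIM ∈ SfaceI p I) :
    klDivE
        ((muFace p I {θ : Fin p → ℝ | ∑ j, |θ j - θstarIM j| ≤ η})⁻¹ •
          (muFace p I).restrict {θ : Fin p → ℝ | ∑ j, |θ j - θstarIM j| ≤ η})
        (muFace p I) ≤
      ((((I.card : ℝ) - 1) * Real.log (max (I.card : ℝ) (4 / η)) : ℝ) : EReal) := by
  classical
  have hI : I.Nonempty := by
    obtain ⟨⟨hsum, j, hj, _⟩, hsupp⟩ := hθstar
    exact ⟨j, (hsupp j).mp (ne_of_gt hj)⟩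
  have hcard : 1 ≤ I.card := Finset.card_pos.mpr hI
  have hη1 : η ≤ 1 := hη'.trans (by
    rw [div_le_one (by exact_mod_cast Nat.pos_of_ne_zero (by omega) : (0:ℝ) < n)]
    exact_mod_cast hn)
  set dR : ℝ := (I.card : ℝ) - 1 with hdR
  have hdR0 : 0 ≤ dR := by
    rw [hdR, sub_nonneg]
    exact_mod_cast hcard
  have hdRnat : dR = ((I.card - 1 : ℕ) : ℝ) := by
    rw [hdR]
    push_cast [hcard]
    ring
  set A : Set (Fin p → ℝ) := {θ : Fin p → ℝ | ∑ j, |θ j - θstarIM j| ≤ η} with hAdef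
  have hAmeas : MeasurableSet A := by
    have hcont : Continuous fun θ : Fin p → ℝ => ∑ j, |θ j - θstarIM j| := by fun_prop
    exact hcont.measurable measurableSet_Iic
  -- RHS nonneg
  have hrpos : (0:ℝ) < max (I.card : ℝ) (4 / η) :=
    lt_of_lt_of_le (by positivity) (le_max_right _ _)
  have hRHS0 : (0:ℝ) ≤ ((I.card : ℝ) - 1) * Real.log (max (I.card : ℝ) (4 / η)) := by
    refine mul_nonneg hdR0 (Real.log_nonneg ?_)
    refine le_max_of_le_right ?_
    rw [le_div_iff₀ hη]
    linarith
  set c : ℝ≥0∞ := muFace p I A with hc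
  by_cases hc0 : c = 0
  · have hres : (muFace p I).restrict A = 0 := Measure.restrict_eq_zero.mpr hc0
    rw [hres, smul_zero]
    have h1 : (0 : Measure (Fin p → ℝ)) ≪ muFace p I := Measure.AbsolutelyContinuous.zero _
    have h2 : Integrable (llr 0 (muFace p I)) (0 : Measure (Fin p → ℝ)) :=
      integrable_zero_measure
    rw [klDivE, if_pos ⟨h1, h2⟩, integral_zero_measure]
    exact EReal.coe_le_coe_iff.mpr hRHS0
  · -- main case: c ≠ 0
    set H : Measure (Fin p → ℝ) := μH[dR] with hH
    set s : Set (Fin p → ℝ) := SfaceI p I with hsdef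
    have hμapp : ∀ B : Set (Fin p → ℝ), MeasurableSet B →
        muFace p I B = (H s)⁻¹ * H (B ∩ s) := by
      intro B hB
      rw [show muFace p I = (H s)⁻¹ • H.restrict s from rfl, Measure.smul_apply,
        Measure.restrict_apply hB, smul_eq_mul]
    have hcA : c = (H s)⁻¹ * H (A ∩ s) := by rw [hc]; exact hμapp A hAmeas
    have hHs0 : H s ≠ 0 := by
      intro h
      apply hc0
      have h0 : H (A ∩ s) = 0 :=
        le_antisymm ((measure_mono Set.inter_subset_right).trans h.le) (zero_le)
      rw [hcA, h0, mul_zero]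
    have hHstop : H s ≠ ⊤ := by
      intro h
      apply hc0
      rw [hcA, h, ENNReal.inv_top, zero_mul]
    set P₀ : Set (Fin p → ℝ) := {θ ∈ SfaceI p I | ∀ j, 0 ≤ θ j * θstarIM j} with hP₀
    have h1 : H s ≤ ∑ T ∈ (I.erase (I.min' hI)).powerset, H (flipT T '' P₀) :=
      le_trans (measure_mono (face_cover hI hθstar)) (measure_biUnion_finset_le _ _)
    have h2 : ∀ T : Finset (Fin p), H (flipT T '' P₀) = H P₀ := fun T =>
      (flipT_isometry T).hausdorffMeasure_image (Or.inl hdR0) _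
    have h3 : H s ≤ (2 : ℝ≥0∞) ^ (I.card - 1) * H P₀ := by
      refine h1.trans_eq ?_
      rw [Finset.sum_congr rfl fun T _ => h2 T, Finset.sum_const,
        Finset.card_powerset, Finset.card_erase_of_mem (I.min'_mem hI), nsmul_eq_mul]
      push_cast
      ring
    have hhomeq : H (AffineMap.homothety θstarIM (η/2) '' P₀)
        = ENNReal.ofReal ((η/2) ^ dR) * H P₀ := by
      rw [hH, hausdorffMeasure_homothety_image hdR0 θstarIM
        (ne_of_gt (by positivity : (0:ℝ) < η/2)) P₀]
      rw [ENNReal.smul_def, smul_eq_mul]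
      congr 1
      rw [ENNReal.coe_rpow_of_ne_zero (by simp [Real.nnnorm_of_nonneg]; positivity),
        ← enorm_eq_nnnorm, Real.enorm_eq_ofReal (by positivity),
        ← ENNReal.ofReal_rpow_of_pos (by positivity)]
    have h4 : ENNReal.ofReal ((η/2) ^ dR) * H P₀ ≤ H (A ∩ s) := by
      rw [← hhomeq]
      exact measure_mono (homothety_image_subset hI hη hη1 hθstar)
    have hscal : ENNReal.ofReal ((η/4) ^ dR) * (2 : ℝ≥0∞) ^ (I.card - 1)
        = ENNReal.ofReal ((η/2) ^ dR) := by
      have h2pow : ((2 : ℝ≥0∞)) ^ (I.card - 1) = ENNReal.ofReal ((2:ℝ) ^ (I.card - 1)) := by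
        rw [ENNReal.ofReal_pow (by norm_num)]
        norm_num
      rw [h2pow, ← ENNReal.ofReal_mul (by positivity)]
      congr 1
      have hnat : ((2:ℝ) ^ (I.card - 1)) = (2:ℝ) ^ dR := by
        rw [hdRnat, Real.rpow_natCast]
      rw [hnat, ← Real.mul_rpow (by positivity) (by norm_num),
        show (η/4*2 : ℝ) = η/2 by ring]
    have hgeom : ENNReal.ofReal ((η/4) ^ dR) * H s ≤ H (A ∩ s) :=
      calc ENNReal.ofReal ((η/4) ^ dR) * H s
          ≤ ENNReal.ofReal ((η/4) ^ dR) * ((2:ℝ≥0∞) ^ (I.card - 1) * H P₀) :=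
            mul_le_mul_right h3 _
        _ = ENNReal.ofReal ((η/2) ^ dR) * H P₀ := by rw [← mul_assoc, hscal]
        _ ≤ H (A ∩ s) := h4
    have hkc : ENNReal.ofReal ((η/4) ^ dR) ≤ c := by
      rw [hcA]
      calc ENNReal.ofReal ((η/4) ^ dR)
          = (H s)⁻¹ * (ENNReal.ofReal ((η/4) ^ dR) * H s) := by
            rw [mul_comm (ENNReal.ofReal ((η/4) ^ dR)) (H s), ← mul_assoc,
              ENNReal.inv_mul_cancel hHs0 hHstop, one_mul]
        _ ≤ (H s)⁻¹ * H (A ∩ s) := mul_le_mul_right hgeom _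
    have hc1 : c ≤ 1 := by
      rw [hcA]
      calc (H s)⁻¹ * H (A ∩ s) ≤ (H s)⁻¹ * H s :=
            mul_le_mul_right (measure_mono Set.inter_subset_right) _
        _ = 1 := ENNReal.inv_mul_cancel hHs0 hHstop
    have hctop : c ≠ ⊤ := (hc1.trans_lt ENNReal.one_lt_top).ne
    have hμuniv : muFace p I Set.univ = 1 := by
      rw [hμapp _ MeasurableSet.univ, Set.univ_inter]
      exact ENNReal.inv_mul_cancel hHs0 hHstop
    haveI : IsProbabilityMeasure (muFace p I) := ⟨hμuniv⟩
    set m : Measure (Fin p → ℝ) := c⁻¹ • (muFace p I).restrict A with hm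
    have hmwd : m = (muFace p I).withDensity (A.indicator fun _ => c⁻¹) := by
      rw [withDensity_indicator hAmeas, withDensity_const, hm]
    have habs : m ≪ muFace p I := by
      rw [hmwd]; exact withDensity_absolutelyContinuous _ _
    have hrn : m.rnDeriv (muFace p I) =ᵐ[muFace p I] A.indicator fun _ => c⁻¹ := by
      rw [hmwd]
      exact Measure.rnDeriv_withDensity _ (measurable_const.indicator hAmeas)
    have hmuniv : m Set.univ = 1 := by
      rw [hm, Measure.smul_apply, Measure.restrict_apply_univ, smul_eq_mul, ← hc,
        ENNReal.inv_mul_cancel hc0 hctop]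
    haveI : IsProbabilityMeasure m := ⟨hmuniv⟩
    have hmAc : m Aᶜ = 0 := by
      rw [hm, Measure.smul_apply, Measure.restrict_apply hAmeas.compl,
        Set.compl_inter_self, measure_empty, smul_eq_mul, mul_zero]
    have haeA : ∀ᵐ x ∂m, x ∈ A := by
      rw [ae_iff]
      exact hmAc
    have hllr : llr m (muFace p I) =ᵐ[m] fun _ => Real.log (c⁻¹).toReal := by
      filter_upwards [habs.ae_le hrn, haeA] with x hx hxA
      rw [llr, hx, Set.indicator_of_mem hxA]
    have hint : Integrable (llr m (muFace p I)) m := (integrable_const _).congr hllr.symm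
    rw [klDivE, if_pos ⟨habs, hint⟩]
    have hInt : ∫ x, llr m (muFace p I) x ∂m = Real.log (c⁻¹).toReal := by
      rw [integral_congr_ae hllr, integral_const, probReal_univ, one_smul]
    rw [hInt]
    refine EReal.coe_le_coe_iff.mpr ?_
    have hcpos : 0 < c.toReal := ENNReal.toReal_pos hc0 hctop
    have hktr : (η/4) ^ dR ≤ c.toReal := by
      have h := ENNReal.toReal_mono hctop hkc
      rwa [ENNReal.toReal_ofReal (by positivity)] at h
    rw [ENNReal.toReal_inv, Real.log_inv]
    have l1 : Real.log ((η/4) ^ dR) ≤ Real.log c.toReal :=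
      Real.log_le_log (by positivity) hktr
    have l2 : Real.log ((η/4 : ℝ) ^ dR) = dR * Real.log (η/4) := Real.log_rpow (by positivity) _
    have l3 : Real.log ((η:ℝ)/4) = -Real.log (4/η) := by
      rw [← Real.log_inv, inv_div]
    have l4 : Real.log (4/η) ≤ Real.log (max (I.card : ℝ) (4/η)) :=
      Real.log_le_log (by positivity) (le_max_right _ _)
    have l5 : dR * Real.log (4/η) ≤ dR * Real.log (max (I.card : ℝ) (4/η)) :=
      mul_le_mul_of_nonneg_left l4 hdR0
    have l3' : dR * Real.log (η/4) = -(dR * Real.log (4/η)) := by rw [l3]; ring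
    linarith
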